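/- Riemann invariant form of the viscous system: Let ε ∈ ℝ, let V ⊆ ℝ² be open (coordinates (t,x)), and let σ, β : V → ℝ be C² functions with σ(t,x) > |β(t,x)| for all (t,x) ∈ V, satisfying pointwise on V the regularized system ∂_t σ + ∂_x [ artanh(β/σ) ] = ε ∂²_x σ and ∂_t β + ∂_x [ (1/2)·log(σ² − β²) ] = ε ∂²_x β. Then the Riemann invariants w₁ = σ + β and w₂ = σ − β satisfy pointwise on V the scalar equations ∂_t w₁ + ∂_x [ log(w₁) ] = ε ∂²_x w₁ and ∂_t w₂ − ∂_x [ log(w₂) ] = ε ∂²_x w₂. -/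

import Mathlib

noncomputable section

/-- Inverse hyperbolic tangent. -/
def artanh (x : ℝ) : ℝ := (1/2) * Real.log ((1 + x) / (1 - x))

/-- **Riemann invariant form of the viscous system** (eq. (6.2)): if `(σ,β)` is a C²
solution of the regularized system on an open set `V` with `σ > |β|`, then the Riemann
invariants `w₁ = σ + β` and `w₂ = σ − β` satisfy the scalar viscous equations
`∂_t w₁ + ∂_x log w₁ = ε ∂²_x w₁` and `∂_t w₂ − ∂_x log w₂ = ε ∂²_x w₂` on `V`. -/
theorem riemann_invariant_viscous_form
    (ε : ℝ) (V : Set (ℝ × ℝ)) (hV : IsOpen V)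
    (σ β : ℝ → ℝ → ℝ)
    (hσ : ContDiffOn ℝ 2 (fun p : ℝ × ℝ => σ p.1 p.2) V)
    (hβ : ContDiffOn ℝ 2 (fun p : ℝ × ℝ => β p.1 p.2) V)
    (hU : ∀ t x : ℝ, (t, x) ∈ V → |β t x| < σ t x)
    (heq1 : ∀ t x : ℝ, (t, x) ∈ V →
      deriv (fun t' => σ t' x) t + deriv (fun x' => artanh (β t x' / σ t x')) x
        = ε * deriv (fun x' => deriv (fun x'' => σ t x'') x') x)
    (heq2 : ∀ t x : ℝ, (t, x) ∈ V →
      deriv (fun t' => β t' x) t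
          + deriv (fun x' => (1/2) * Real.log ((σ t x')^2 - (β t x')^2)) x
        = ε * deriv (fun x' => deriv (fun x'' => β t x'') x') x) :
    ∀ t x : ℝ, (t, x) ∈ V →
      (deriv (fun t' => σ t' x + β t' x) t
          + deriv (fun x' => Real.log (σ t x' + β t x')) x
        = ε * deriv (fun x' => deriv (fun x'' => σ t x'' + β t x'') x') x) ∧
      (deriv (fun t' => σ t' x - β t' x) t
          - deriv (fun x' => Real.log (σ t x' - β t x')) x
        = ε * deriv (fun x' => deriv (fun x'' => σ t x'' - β t x'') x') x) := by
  intro t x hx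
  -- The slice in the x-direction
  set W : Set ℝ := (Prod.mk t) ⁻¹' V with hWdef
  have hW : IsOpen W := hV.preimage (Continuous.prodMk_right t)
  have hxW : x ∈ W := hx
  set g : ℝ → ℝ := fun x' => σ t x' with hgdef
  set h : ℝ → ℝ := fun x' => β t x' with hhdef
  have hmk : ContDiff ℝ 2 (fun x' : ℝ => (t, x')) := contDiff_const.prodMk contDiff_id
  have hgC : ContDiffOn ℝ 2 g W := by
    exact (hσ.comp (hmk.contDiffOn) (fun x' hx' => hx'))
  have hhC : ContDiffOn ℝ 2 h W := by
    exact (hβ.comp (hmk.contDiffOn) (fun x' hx' => hx'))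
  -- differentiability facts in x
  have hgd : ∀ x' ∈ W, DifferentiableAt ℝ g x' := fun x' hx' =>
    (hgC.contDiffAt (hW.mem_nhds hx')).differentiableAt two_ne_zero
  have hhd : ∀ x' ∈ W, DifferentiableAt ℝ h x' := fun x' hx' =>
    (hhC.contDiffAt (hW.mem_nhds hx')).differentiableAt two_ne_zero
  have hgx : DifferentiableAt ℝ g x := hgd x hxW
  have hhx : DifferentiableAt ℝ h x := hhd x hxW
  have hgd2 : DifferentiableAt ℝ (deriv g) x :=
    ((hgC.deriv_of_isOpen hW (by norm_num)).contDiffAt (hW.mem_nhds hxW)).differentiableAt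
      one_ne_zero
  have hhd2 : DifferentiableAt ℝ (deriv h) x :=
    ((hhC.deriv_of_isOpen hW (by norm_num)).contDiffAt (hW.mem_nhds hxW)).differentiableAt
      one_ne_zero
  -- positivity facts
  have hpos : ∀ x' ∈ W, 0 < g x' + h x' ∧ 0 < g x' - h x' := by
    intro x' hx'
    have := abs_lt.mp (hU t x' hx')
    constructor <;> linarith [this.1, this.2]
  have hp1 : 0 < g x + h x := (hpos x hxW).1
  have hp2 : 0 < g x - h x := (hpos x hxW).2
  -- differentiability in t
  have hmkt : ContDiff ℝ 2 (fun t' : ℝ => (t', x)) := contDiff_id.prodMk contDiff_const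
  have hσt : DifferentiableAt ℝ (fun t' => σ t' x) t := by
    have := (hσ.contDiffAt (hV.mem_nhds hx)).comp t (hmkt.contDiffAt)
    exact this.differentiableAt two_ne_zero
  have hβt : DifferentiableAt ℝ (fun t' => β t' x) t := by
    have := (hβ.contDiffAt (hV.mem_nhds hx)).comp t (hmkt.contDiffAt)
    exact this.differentiableAt two_ne_zero
  -- the log functions
  set L1 : ℝ → ℝ := fun x' => Real.log (g x' + h x') with hL1def
  set L2 : ℝ → ℝ := fun x' => Real.log (g x' - h x') with hL2def
  have hL1 : DifferentiableAt ℝ L1 x := (hgx.add hhx).log hp1.ne'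
  have hL2 : DifferentiableAt ℝ L2 x := (hgx.sub hhx).log hp2.ne'
  have hEV : ∀ᶠ x' in nhds x, x' ∈ W := hW.eventually_mem hxW
  -- eventual identities for the flux terms
  have eqA : (fun x' => artanh (β t x' / σ t x')) =ᶠ[nhds x]
      fun x' => (1/2) * (L1 x' - L2 x') := by
    filter_upwards [hEV] with x' hx'
    have h1 := (hpos x' hx').1
    have h2 := (hpos x' hx').2
    have hg0 : g x' ≠ 0 := by
      have := abs_lt.mp (hU t x' hx'); simp only [hgdef]; nlinarith [abs_nonneg (β t x')]
    have harg : (1 + h x' / g x') / (1 - h x' / g x') = (g x' + h x') / (g x' - h x') := by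
      field_simp
    show artanh (h x' / g x') = (1/2) * (L1 x' - L2 x')
    rw [artanh, harg, Real.log_div h1.ne' h2.ne']
  have eqB : (fun x' => (1/2) * Real.log ((σ t x')^2 - (β t x')^2)) =ᶠ[nhds x]
      fun x' => (1/2) * (L1 x' + L2 x') := by
    filter_upwards [hEV] with x' hx'
    have h1 := (hpos x' hx').1
    have h2 := (hpos x' hx').2
    show (1/2) * Real.log ((g x')^2 - (h x')^2) = (1/2) * (L1 x' + L2 x')
    have : (g x')^2 - (h x')^2 = (g x' + h x') * (g x' - h x') := by ring
    rw [this, Real.log_mul h1.ne' h2.ne']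
  have hAdiff : DifferentiableAt ℝ (fun x' => artanh (β t x' / σ t x')) x := by
    rw [eqA.differentiableAt_iff]
    exact (hL1.sub hL2).const_mul _
  have hBdiff : DifferentiableAt ℝ
      (fun x' => (1/2) * Real.log ((σ t x')^2 - (β t x')^2)) x := by
    rw [eqB.differentiableAt_iff]
    exact (hL1.add hL2).const_mul _
  -- derivative of flux sum/difference
  have eqSum : (fun x' => artanh (β t x' / σ t x')
      + (1/2) * Real.log ((σ t x')^2 - (β t x')^2)) =ᶠ[nhds x] L1 := by
    filter_upwards [eqA, eqB] with x' hA hB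
    rw [hA, hB]; ring
  have eqDiff : (fun x' => artanh (β t x' / σ t x')
      - (1/2) * Real.log ((σ t x')^2 - (β t x')^2)) =ᶠ[nhds x] fun x' => -L2 x' := by
    filter_upwards [eqA, eqB] with x' hA hB
    rw [hA, hB]; ring
  have hderivSum : deriv (fun x' => artanh (β t x' / σ t x')) x
      + deriv (fun x' => (1/2) * Real.log ((σ t x')^2 - (β t x')^2)) x
      = deriv L1 x := by
    rw [← deriv_add hAdiff hBdiff]
    exact eqSum.deriv_eq
  have hderivDiff : deriv (fun x' => artanh (β t x' / σ t x')) x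
      - deriv (fun x' => (1/2) * Real.log ((σ t x')^2 - (β t x')^2)) x
      = -deriv L2 x := by
    rw [← deriv_sub hAdiff hBdiff]
    exact eqDiff.deriv_eq.trans deriv.neg
  -- second derivatives of sum/difference
  have eqd1 : (fun x' => deriv (fun x'' => g x'' + h x'') x') =ᶠ[nhds x]
      fun x' => deriv g x' + deriv h x' := by
    filter_upwards [hEV] with x' hx'
    exact deriv_add (hgd x' hx') (hhd x' hx')
  have eqd2 : (fun x' => deriv (fun x'' => g x'' - h x'') x') =ᶠ[nhds x]
      fun x' => deriv g x' - deriv h x' := by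
    filter_upwards [hEV] with x' hx'
    exact deriv_sub (hgd x' hx') (hhd x' hx')
  have hsec1 : deriv (fun x' => deriv (fun x'' => g x'' + h x'') x') x
      = deriv (deriv g) x + deriv (deriv h) x := by
    rw [eqd1.deriv_eq]; exact deriv_add hgd2 hhd2
  have hsec2 : deriv (fun x' => deriv (fun x'' => g x'' - h x'') x') x
      = deriv (deriv g) x - deriv (deriv h) x := by
    rw [eqd2.deriv_eq]; exact deriv_sub hgd2 hhd2
  -- time derivatives of sum/difference
  have ht1 : deriv (fun t' => σ t' x + β t' x) t
      = deriv (fun t' => σ t' x) t + deriv (fun t' => β t' x) t := deriv_add hσt hβt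
  have ht2 : deriv (fun t' => σ t' x - β t' x) t
      = deriv (fun t' => σ t' x) t - deriv (fun t' => β t' x) t := deriv_sub hσt hβt
  have h1 := heq1 t x hx
  have h2 := heq2 t x hx
  constructor
  · show deriv (fun t' => σ t' x + β t' x) t + deriv L1 x
      = ε * deriv (fun x' => deriv (fun x'' => g x'' + h x'') x') x
    rw [ht1, hsec1, ← hderivSum]
    have hg' : deriv (fun x'' => σ t x'') = deriv g := rfl
    have hh' : deriv (fun x'' => β t x'') = deriv h := rfl
    rw [hg'] at h1; rw [hh'] at h2
    linarith
  · show deriv (fun t' => σ t' x - β t' x) t - deriv L2 x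
      = ε * deriv (fun x' => deriv (fun x'' => g x'' - h x'') x') x
    rw [ht2, hsec2]
    have hg' : deriv (fun x'' => σ t x'') = deriv g := rfl
    have hh' : deriv (fun x'' => β t x'') = deriv h := rfl
    rw [hg'] at h1; rw [hh'] at h2
    linarith [hderivDiff]
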